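/- arXiv:1812.00356 — 5 statements merged into one kernel-verified Lean document; each statement's English description precedes it below -/
import Mathlib

section
/- Let d ≥ 1, let a > 0, and let y ∈ ℝ^d lie outside the closed cube Q_4(0) = [−2,2]^d. Then sup_{x ∈ Q_2(0)} e^{−a|x−y|²} ≤ 2^{d−1} e^{(d−1)a/2} · Σ_{n ∈ {−1,0,1}^d} e^{−a|n−y|²}. -/
set_option maxHeartbeats 1000000


open Real

/-- For `d ≥ 1`, `a > 0` and `y` outside the closed cube `Q₄(0) = [-2,2]^d`,
the supremum over the cube `Q₂(0) = [-1,1]^d` of `exp (-a * |x - y|²)` is bounded by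
`2^(d-1) * exp ((d-1) * a / 2)` times the sum of `exp (-a * |n - y|²)` over the lattice
points `n ∈ {-1,0,1}^d`. -/
theorem lattice_gaussian_bound_outside
    (d : ℕ) (hd : 1 ≤ d) (a : ℝ) (ha : 0 < a)
    (y : EuclideanSpace ℝ (Fin d)) (hy : ¬ ∀ i, |y i| ≤ 2) :
    ∀ x : EuclideanSpace ℝ (Fin d), (∀ i, |x i| ≤ 1) →
      Real.exp (-a * ‖x - y‖ ^ 2) ≤
        2 ^ (d - 1) * Real.exp (((d : ℝ) - 1) * a / 2) *
          ∑ m ∈ Fintype.piFinset (fun _ : Fin d => ({-1, 0, 1} : Finset ℤ)),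
            Real.exp (-a * ‖(show EuclideanSpace ℝ (Fin d) from WithLp.toLp 2 (fun i => (m i : ℝ))) - y‖ ^ 2) := by
  intro x hx
  push_neg at hy
  obtain ⟨j, hj⟩ := hy
  set n : Fin d → ℤ := fun i => if y i ≤ -(1/2) then -1 else if (1/2:ℝ) ≤ y i then 1 else 0
    with hn
  have hmem : n ∈ Fintype.piFinset (fun _ : Fin d => ({-1, 0, 1} : Finset ℤ)) := by
    rw [Fintype.mem_piFinset]
    intro i
    simp only [hn, Finset.mem_insert, Finset.mem_singleton]
    split_ifs <;> simp
  -- per-coordinate bounds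
  have hA : ∀ i, ((n i : ℝ) - y i) ^ 2 ≤ (x i - y i) ^ 2 + 1/2 := by
    intro i
    have h1 : -1 ≤ x i := neg_le_of_abs_le (hx i)
    have h2 : x i ≤ 1 := le_of_abs_le (hx i)
    simp only [hn]
    split_ifs with hc1 hc2
    · push_cast
      nlinarith [mul_nonneg (by linarith : (0:ℝ) ≤ x i + 1)
        (by linarith : (0:ℝ) ≤ -2 * y i - 1), sq_nonneg (x i + 1/2)]
    · push_cast
      nlinarith [mul_nonneg (by linarith : (0:ℝ) ≤ 1 - x i)
        (by linarith : (0:ℝ) ≤ 2 * y i - 1), sq_nonneg (x i - 1/2)]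
    · push_cast
      push_neg at hc1 hc2
      nlinarith [sq_nonneg (x i - y i),
        mul_nonneg (by linarith : (0:ℝ) ≤ 1/2 - y i) (by linarith : (0:ℝ) ≤ 1/2 + y i)]
  have hB : ((n j : ℝ) - y j) ^ 2 ≤ (x j - y j) ^ 2 := by
    have h1 : -1 ≤ x j := neg_le_of_abs_le (hx j)
    have h2 : x j ≤ 1 := le_of_abs_le (hx j)
    rcases lt_abs.mp hj with h | h
    · have e : n j = 1 := by
        simp only [hn]
        rw [if_neg (by linarith), if_pos (by linarith)]
      rw [e]
      push_cast
      nlinarith [mul_nonneg (by linarith : (0:ℝ) ≤ 1 - x j)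
        (by linarith : (0:ℝ) ≤ 2 * y j - x j - 1)]
    · have e : n j = -1 := by
        simp only [hn]
        rw [if_pos (by linarith)]
      rw [e]
      push_cast
      nlinarith [mul_nonneg (by linarith : (0:ℝ) ≤ x j + 1)
        (by linarith : (0:ℝ) ≤ x j + 1 - 2 * y j)]
  -- norms as coordinate sums
  have hnorm : ∀ v : EuclideanSpace ℝ (Fin d), ‖v‖ ^ 2 = ∑ i, (v i) ^ 2 := by
    intro v
    rw [EuclideanSpace.norm_eq, Real.sq_sqrt (Finset.sum_nonneg fun i _ => sq_nonneg _)]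
    simp [Real.norm_eq_abs, sq_abs]
  set N : EuclideanSpace ℝ (Fin d) := WithLp.toLp 2 (fun i => (n i : ℝ)) with hN
  have key : ‖N - y‖ ^ 2 ≤ ‖x - y‖ ^ 2 + ((d : ℝ) - 1) / 2 := by
    have hNs : ‖N - y‖ ^ 2 = ∑ i, ((n i : ℝ) - y i) ^ 2 := by
      rw [hnorm]
      congr 1
    have hxs : ‖x - y‖ ^ 2 = ∑ i, (x i - y i) ^ 2 := by
      rw [hnorm]
      congr 1
    rw [hNs, hxs]
    have hsplitN := Finset.add_sum_erase Finset.univ (fun i => ((n i : ℝ) - y i) ^ 2)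
      (Finset.mem_univ j)
    have hsplitx := Finset.add_sum_erase Finset.univ (fun i => (x i - y i) ^ 2)
      (Finset.mem_univ j)
    have hrest : ∑ i ∈ Finset.univ.erase j, ((n i : ℝ) - y i) ^ 2 ≤
        ∑ i ∈ Finset.univ.erase j, ((x i - y i) ^ 2 + 1/2) := by
      exact Finset.sum_le_sum fun i _ => hA i
    have hcard : (Finset.univ.erase j).card = d - 1 := by
      rw [Finset.card_erase_of_mem (Finset.mem_univ j)]
      simp
    have hsum_half : ∑ i ∈ Finset.univ.erase j, ((x i - y i) ^ 2 + 1/2) =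
        (∑ i ∈ Finset.univ.erase j, (x i - y i) ^ 2) + ((d : ℝ) - 1) / 2 := by
      rw [Finset.sum_add_distrib, Finset.sum_const, hcard, nsmul_eq_mul,
        Nat.cast_sub hd]
      push_cast
      ring
    calc ∑ i, ((n i : ℝ) - y i) ^ 2
        = ((n j : ℝ) - y j) ^ 2 + ∑ i ∈ Finset.univ.erase j, ((n i : ℝ) - y i) ^ 2 := by
          rw [hsplitN]
      _ ≤ (x j - y j) ^ 2 + ((∑ i ∈ Finset.univ.erase j, (x i - y i) ^ 2) + ((d : ℝ) - 1) / 2) := by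
          rw [← hsum_half]; exact add_le_add hB hrest
      _ = (∑ i, (x i - y i) ^ 2) + ((d : ℝ) - 1) / 2 := by
          rw [← hsplitx]; ring
  -- assemble
  have step1 : Real.exp (-a * ‖x - y‖ ^ 2) ≤
      Real.exp (((d : ℝ) - 1) * a / 2) * Real.exp (-a * ‖N - y‖ ^ 2) := by
    rw [← Real.exp_add, Real.exp_le_exp]
    nlinarith [key]
  have step2 : Real.exp (-a * ‖N - y‖ ^ 2) ≤
      ∑ m ∈ Fintype.piFinset (fun _ : Fin d => ({-1, 0, 1} : Finset ℤ)),
        Real.exp (-a * ‖(show EuclideanSpace ℝ (Fin d) from WithLp.toLp 2 (fun i => (m i : ℝ))) - y‖ ^ 2) := by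
    exact Finset.single_le_sum
      (f := fun m : Fin d → ℤ =>
        Real.exp (-a * ‖(show EuclideanSpace ℝ (Fin d) from WithLp.toLp 2 (fun i => (m i : ℝ))) - y‖ ^ 2))
      (fun m _ => (Real.exp_pos _).le) hmem
  have hS : (0:ℝ) ≤ ∑ m ∈ Fintype.piFinset (fun _ : Fin d => ({-1, 0, 1} : Finset ℤ)),
      Real.exp (-a * ‖(show EuclideanSpace ℝ (Fin d) from WithLp.toLp 2 (fun i => (m i : ℝ))) - y‖ ^ 2) :=
    Finset.sum_nonneg fun m _ => (Real.exp_pos _).le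
  have hpow : (1:ℝ) ≤ 2 ^ (d - 1) := one_le_pow₀ (by norm_num : (1:ℝ) ≤ 2)
  calc Real.exp (-a * ‖x - y‖ ^ 2)
      ≤ Real.exp (((d : ℝ) - 1) * a / 2) * Real.exp (-a * ‖N - y‖ ^ 2) := step1
    _ ≤ Real.exp (((d : ℝ) - 1) * a / 2) *
        ∑ m ∈ Fintype.piFinset (fun _ : Fin d => ({-1, 0, 1} : Finset ℤ)),
          Real.exp (-a * ‖(show EuclideanSpace ℝ (Fin d) from WithLp.toLp 2 (fun i => (m i : ℝ))) - y‖ ^ 2) := by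
        exact mul_le_mul_of_nonneg_left step2 (Real.exp_pos _).le
    _ ≤ 2 ^ (d - 1) * Real.exp (((d : ℝ) - 1) * a / 2) *
        ∑ m ∈ Fintype.piFinset (fun _ : Fin d => ({-1, 0, 1} : Finset ℤ)),
          Real.exp (-a * ‖(show EuclideanSpace ℝ (Fin d) from WithLp.toLp 2 (fun i => (m i : ℝ))) - y‖ ^ 2) := by
        have := mul_le_mul_of_nonneg_right
          (mul_le_mul_of_nonneg_right hpow (Real.exp_pos (((d : ℝ) - 1) * a / 2)).le) hS
        simpa using this
end

section
/- Let d ≥ 1, let a > 0, and let y ∈ Q_4(0) = [−2,2]^d. Then sup_{x ∈ Q_2(0)} e^{−a|x−y|²} ≤ e^{4ad} · Σ_{n ∈ {−1,0,1}^d} e^{−a|n−y|²}. -/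
open Real

/-- For `d ≥ 1`, `a > 0` and `y` inside the closed cube `Q₄(0) = [-2,2]^d`,
the supremum over the cube `Q₂(0) = [-1,1]^d` of `exp (-a * |x - y|²)` is bounded by
`exp (4 * a * d)` times the sum of `exp (-a * |n - y|²)` over the lattice points
`n ∈ {-1,0,1}^d`. -/
theorem lattice_gaussian_bound_inside
    (d : ℕ) (hd : 1 ≤ d) (a : ℝ) (ha : 0 < a)
    (y : EuclideanSpace ℝ (Fin d)) (hy : ∀ i, |y i| ≤ 2) :
    ∀ x : EuclideanSpace ℝ (Fin d), (∀ i, |x i| ≤ 1) →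
      Real.exp (-a * ‖x - y‖ ^ 2) ≤
        Real.exp (4 * a * d) *
          ∑ m ∈ Fintype.piFinset (fun _ : Fin d => ({-1, 0, 1} : Finset ℤ)),
            Real.exp (-a * ‖(show EuclideanSpace ℝ (Fin d) from WithLp.toLp 2 fun i => (m i : ℝ)) - y‖ ^ 2) := by
  intro x hx
  -- choose the nearest lattice point to y
  set m : Fin d → ℤ := fun i => if y i ≤ -1/2 then -1 else if y i ≤ 1/2 then 0 else 1 with hm
  have hmem : m ∈ Fintype.piFinset (fun _ : Fin d => ({-1, 0, 1} : Finset ℤ)) := by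
    rw [Fintype.mem_piFinset]
    intro i
    simp only [hm, Finset.mem_insert, Finset.mem_singleton]
    split_ifs <;> simp
  have hcoord : ∀ i, ((m i : ℝ) - y i) ^ 2 ≤ 1 := by
    intro i
    have h2 := hy i
    rw [abs_le] at h2
    simp only [hm]
    split_ifs with h1 h3
    · push_cast; nlinarith [h2.1]
    · push_cast; push_neg at h1; nlinarith
    · push_cast; push_neg at h3; nlinarith [h2.2]
  have hnorm : ‖(show EuclideanSpace ℝ (Fin d) from WithLp.toLp 2 fun i => (m i : ℝ)) - y‖ ^ 2 ≤ d := by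
    rw [EuclideanSpace.norm_eq, Real.sq_sqrt (by positivity)]
    calc (∑ i, ‖((show EuclideanSpace ℝ (Fin d) from WithLp.toLp 2 fun i => (m i : ℝ)) - y) i‖ ^ 2)
        ≤ ∑ _i : Fin d, (1 : ℝ) := by
          apply Finset.sum_le_sum
          intro i _
          simp only [PiLp.sub_apply, PiLp.toLp_apply, EuclideanSpace.norm_eq, Real.norm_eq_abs, sq_abs]
          exact hcoord i
      _ = d := by simp
  have hx2 : (0:ℝ) ≤ ‖x - y‖ ^ 2 := by positivity
  have hkey : Real.exp (-a * ‖x - y‖ ^ 2) ≤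
      Real.exp (4 * a * d) *
        Real.exp (-a * ‖(show EuclideanSpace ℝ (Fin d) from WithLp.toLp 2 fun i => (m i : ℝ)) - y‖ ^ 2) := by
    rw [← Real.exp_add]
    apply Real.exp_le_exp.mpr
    have hd0 : (0:ℝ) ≤ (d:ℝ) := Nat.cast_nonneg d
    nlinarith
  have hsum := Finset.single_le_sum
    (f := fun n : Fin d → ℤ =>
      Real.exp (-a * ‖(show EuclideanSpace ℝ (Fin d) from WithLp.toLp 2 fun i => (n i : ℝ)) - y‖ ^ 2))
    (fun n _ => Real.exp_nonneg _) hmem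
  exact hkey.trans (mul_le_mul_of_nonneg_left hsum (Real.exp_nonneg _))
end

section
/- Let d ≥ 1 and a > 0. Then for all x, y ∈ ℝ^d, sup_{z ∈ Q_2(x)} e^{−a|z−y|²} ≤ 2^{d−1} e^{4ad} · Σ_{m ∈ {−1,0,1}^d} e^{−a|x+m−y|²}. -/
set_option maxHeartbeats 1000000

open Real

/-- For `d ≥ 1`, `a > 0` and arbitrary `x, y ∈ ℝ^d`, the supremum over the
cube `Q₂(x) = x + [-1,1]^d` of `exp (-a * |z - y|²)` is bounded by `2^(d-1) * exp (4 * a * d)`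
times the sum of `exp (-a * |x + m - y|²)` over `m ∈ {-1,0,1}^d`. -/
theorem lattice_gaussian_bound_around
    (d : ℕ) (hd : 1 ≤ d) (a : ℝ) (ha : 0 < a)
    (x y : EuclideanSpace ℝ (Fin d)) :
    ∀ z : EuclideanSpace ℝ (Fin d), (∀ i, |z i - x i| ≤ 1) →
      Real.exp (-a * ‖z - y‖ ^ 2) ≤
        2 ^ (d - 1) * Real.exp (4 * a * d) *
          ∑ m ∈ Fintype.piFinset (fun _ : Fin d => ({-1, 0, 1} : Finset ℤ)),
            Real.exp (-a * ‖x + (show EuclideanSpace ℝ (Fin d) from WithLp.toLp 2 (fun i => (m i : ℝ))) - y‖ ^ 2) := by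
  intro z hz
  set m : Fin d → ℤ := fun i => if 1 ≤ x i - y i then -1 else if x i - y i ≤ -1 then 1 else 0 with hm
  have hmem : m ∈ Fintype.piFinset (fun _ : Fin d => ({-1, 0, 1} : Finset ℤ)) := by
    rw [Fintype.mem_piFinset]
    intro i
    simp only [hm, Finset.mem_insert, Finset.mem_singleton]
    split_ifs <;> simp
  have hnormz : ‖z - y‖ ^ 2 = ∑ i, (z i - y i) ^ 2 := by
    rw [EuclideanSpace.norm_eq, Real.sq_sqrt (by positivity)]
    simp [sq_abs]
  have hnormm : ‖x + (show EuclideanSpace ℝ (Fin d) from WithLp.toLp 2 (fun i => (m i : ℝ))) - y‖ ^ 2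
      = ∑ i, (x i + (m i : ℝ) - y i) ^ 2 := by
    rw [EuclideanSpace.norm_eq, Real.sq_sqrt (by positivity)]
    simp [sq_abs]
  have key : ‖x + (show EuclideanSpace ℝ (Fin d) from WithLp.toLp 2 (fun i => (m i : ℝ))) - y‖ ^ 2
      ≤ ‖z - y‖ ^ 2 + 4 * d := by
    rw [hnormz, hnormm]
    have : ∀ i, (x i + (m i : ℝ) - y i) ^ 2 ≤ (z i - y i) ^ 2 + 4 := by
      intro i
      have h1 := abs_le.mp (hz i)
      simp only [hm]
      split_ifs with h2 h3
      · push_cast; nlinarith [h1.1, h1.2]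
      · push_cast; nlinarith [h1.1, h1.2]
      · push_cast; push_neg at h2 h3; nlinarith [h1.1, h1.2]
    calc ∑ i, (x i + (m i : ℝ) - y i) ^ 2 ≤ ∑ i : Fin d, ((z i - y i) ^ 2 + 4) :=
          Finset.sum_le_sum (fun i _ => this i)
      _ = ∑ i, (z i - y i) ^ 2 + 4 * d := by
          rw [Finset.sum_add_distrib]; simp [mul_comm]
  have step1 : Real.exp (-a * ‖z - y‖ ^ 2) ≤
      Real.exp (4 * a * d) *
        Real.exp (-a * ‖x + (show EuclideanSpace ℝ (Fin d) from WithLp.toLp 2 (fun i => (m i : ℝ))) - y‖ ^ 2) := by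
    rw [← Real.exp_add]
    apply Real.exp_le_exp.mpr
    nlinarith [mul_le_mul_of_nonneg_left key ha.le]
  have step2 : Real.exp (-a * ‖x + (show EuclideanSpace ℝ (Fin d) from WithLp.toLp 2 (fun i => (m i : ℝ))) - y‖ ^ 2)
      ≤ ∑ m ∈ Fintype.piFinset (fun _ : Fin d => ({-1, 0, 1} : Finset ℤ)),
          Real.exp (-a * ‖x + (show EuclideanSpace ℝ (Fin d) from WithLp.toLp 2 (fun i => (m i : ℝ))) - y‖ ^ 2) :=
    Finset.single_le_sum (f := fun mm : Fin d → ℤ => Real.exp (-a * ‖x + (show EuclideanSpace ℝ (Fin d) from WithLp.toLp 2 (fun i => ((mm i : ℤ) : ℝ))) - y‖ ^ 2)) (fun _ _ => (Real.exp_pos _).le) hmem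
  have h2pow : (1 : ℝ) ≤ 2 ^ (d - 1) := one_le_pow₀ (by norm_num)
  calc Real.exp (-a * ‖z - y‖ ^ 2)
      ≤ Real.exp (4 * a * d) *
        Real.exp (-a * ‖x + (show EuclideanSpace ℝ (Fin d) from WithLp.toLp 2 (fun i => (m i : ℝ))) - y‖ ^ 2) := step1
    _ ≤ Real.exp (4 * a * d) *
        ∑ m ∈ Fintype.piFinset (fun _ : Fin d => ({-1, 0, 1} : Finset ℤ)),
          Real.exp (-a * ‖x + (show EuclideanSpace ℝ (Fin d) from WithLp.toLp 2 (fun i => (m i : ℝ))) - y‖ ^ 2) :=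
        mul_le_mul_of_nonneg_left step2 (Real.exp_pos _).le
    _ ≤ 2 ^ (d - 1) * Real.exp (4 * a * d) *
        ∑ m ∈ Fintype.piFinset (fun _ : Fin d => ({-1, 0, 1} : Finset ℤ)),
          Real.exp (-a * ‖x + (show EuclideanSpace ℝ (Fin d) from WithLp.toLp 2 (fun i => (m i : ℝ))) - y‖ ^ 2) := by
        apply mul_le_mul_of_nonneg_right (le_mul_of_one_le_left (Real.exp_pos _).le h2pow)
        positivity
end

section
/- Let d ≥ 1 and let u₀ ∈ L²(ℝ^d) satisfy u₀ ≥ 0 almost everywhere. Let u(t,x) = (4πt)^{−d/2} ∫_{ℝ^d} e^{−|x−y|²/(4t)} u₀(y) dy be the solution of the heat equation. Then for every t > 0, every k ∈ ℤ^d, and every x ∈ Q_2(k), one has u(t,x) ≤ 2^{d−1} e^{d/t} · Σ_{n ∈ ℤ^d, ‖n−k‖_∞ ≤ 1} u(t,n). -/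
open Real MeasureTheory

/-- The solution of the heat equation on `ℝ^d` with initial datum `u₀`, given by convolution
with the Gaussian heat kernel. -/
noncomputable def heatSolution (d : ℕ) (u₀ : EuclideanSpace ℝ (Fin d) → ℝ)
    (t : ℝ) (x : EuclideanSpace ℝ (Fin d)) : ℝ :=
  (4 * Real.pi * t) ^ (-(d : ℝ) / 2) * ∫ y, Real.exp (-‖x - y‖ ^ 2 / (4 * t)) * u₀ y

private lemma heat_pick1 (a b c : ℝ) (hab : |a - b| ≤ 1) :
    ∃ e : ℤ, e ∈ ({-1, 0, 1} : Finset ℤ) ∧ ((b + e) - c) ^ 2 ≤ (a - c) ^ 2 + 1 / 4 := by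
  rw [abs_le] at hab
  rcases le_or_gt (b + 1/2) c with h1 | h1
  · refine ⟨1, by simp, ?_⟩
    push_cast
    rcases le_or_gt c (b + 1) with h2 | h2
    · nlinarith [sq_nonneg (a - c)]
    · nlinarith [mul_nonneg (by linarith : (0:ℝ) ≤ b + 1 - a)
        (by linarith : (0:ℝ) ≤ 2*c - a - b - 1)]
  rcases le_or_gt c (b - 1/2) with h0 | h0
  · refine ⟨-1, by simp, ?_⟩
    push_cast
    rcases le_or_gt (b - 1) c with h2 | h2
    · nlinarith [sq_nonneg (a - c)]
    · nlinarith [mul_nonneg (by linarith : (0:ℝ) ≤ a - (b - 1))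
        (by linarith : (0:ℝ) ≤ a + b - 1 - 2*c)]
  · exact ⟨0, by simp, by push_cast; nlinarith [sq_nonneg (a - c)]⟩

private lemma heat_norm_sub_sq {d : ℕ} (v w : EuclideanSpace ℝ (Fin d)) :
    ‖v - w‖ ^ 2 = ∑ i, (v i - w i) ^ 2 := by
  rw [EuclideanSpace.norm_eq, Real.sq_sqrt (by positivity)]
  simp [sq_abs]

private lemma heat_gauss_integrable {d : ℕ} (b : ℝ) (hb : 0 < b)
    (c : EuclideanSpace ℝ (Fin d)) :
    Integrable (fun y : EuclideanSpace ℝ (Fin d) => Real.exp (-b * ‖c - y‖ ^ 2)) := by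
  have h0 : Integrable (fun v : EuclideanSpace ℝ (Fin d) =>
      Complex.exp (-(b : ℂ) * ‖v‖ ^ 2 + 0 * (inner ℝ (0 : EuclideanSpace ℝ (Fin d)) v : ℝ))) :=
    GaussianFourier.integrable_cexp_neg_mul_sq_norm_add (by simpa using hb) 0 0
  have h1 : Integrable (fun v : EuclideanSpace ℝ (Fin d) => Real.exp (-b * ‖v‖ ^ 2)) := by
    refine h0.norm.congr (Filter.Eventually.of_forall fun v => ?_)
    simp [Complex.norm_exp, ← Complex.ofReal_pow]
  exact h1.comp_sub_left c

/-- For a non-negative initial datum `u₀ ∈ L²(ℝ^d)`, the heat solution satisfies,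
for every `t > 0`, `k ∈ ℤ^d` and `x ∈ Q₂(k)`,
`u(t,x) ≤ 2^(d-1) * exp (d/t) * ∑_{n ∈ ℤ^d, ‖n-k‖_∞ ≤ 1} u(t,n)`. -/
theorem heat_pointwise_lattice_bound
    (d : ℕ) (hd : 1 ≤ d) (u₀ : EuclideanSpace ℝ (Fin d) → ℝ)
    (hu₀L2 : MemLp u₀ 2 (volume : Measure (EuclideanSpace ℝ (Fin d))))
    (hu₀pos : 0 ≤ᵐ[volume] u₀) :
    ∀ t : ℝ, 0 < t → ∀ k : Fin d → ℤ,
      ∀ x : EuclideanSpace ℝ (Fin d), (∀ i, |x i - (k i : ℝ)| ≤ 1) →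
        heatSolution d u₀ t x ≤
          2 ^ (d - 1) * Real.exp ((d : ℝ) / t) *
            ∑ m ∈ Fintype.piFinset (fun _ : Fin d => ({-1, 0, 1} : Finset ℤ)),
              heatSolution d u₀ t (show EuclideanSpace ℝ (Fin d) from WithLp.toLp 2 (fun i => ((k i + m i : ℤ) : ℝ))) := by
  intro t ht k x hx
  classical
  set F := Fintype.piFinset (fun _ : Fin d => ({-1, 0, 1} : Finset ℤ)) with hF
  set v : (Fin d → ℤ) → EuclideanSpace ℝ (Fin d) := fun m => WithLp.toLp 2 (fun i => ((k i + m i : ℤ) : ℝ)) with hv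
  set C : ℝ := (4 * Real.pi * t) ^ (-(d : ℝ) / 2) with hCdef
  have hC : 0 ≤ C := Real.rpow_nonneg (by positivity) _
  -- integrability of each Gaussian-weighted integrand
  have hI : ∀ c : EuclideanSpace ℝ (Fin d), Integrable (fun y => Real.exp (-‖c - y‖ ^ 2 / (4 * t)) * u₀ y) := by
    intro c
    have hg2 : Integrable (fun y : EuclideanSpace ℝ (Fin d) => Real.exp (-(1/(2*t)) * ‖c - y‖ ^ 2)) :=
      heat_gauss_integrable (1/(2*t)) (by positivity) c
    have hu2 : Integrable (fun y : EuclideanSpace ℝ (Fin d) => u₀ y ^ 2) := hu₀L2.integrable_sq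
    have hmeas : AEStronglyMeasurable (fun y : EuclideanSpace ℝ (Fin d) => Real.exp (-‖c - y‖ ^ 2 / (4 * t)) * u₀ y)
        volume := by
      refine AEStronglyMeasurable.mul ?_ hu₀L2.1
      exact (Continuous.rexp (by fun_prop)).aestronglyMeasurable
    refine Integrable.mono' ((hg2.add hu2).div_const 2) hmeas
      (Filter.Eventually.of_forall fun y => ?_)
    have h1 : Real.exp (-‖c - y‖ ^ 2 / (4 * t)) ^ 2 = Real.exp (-(1/(2*t)) * ‖c - y‖ ^ 2) := by
      rw [← Real.exp_nat_mul]
      congr 1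
      ring
    have h2 : |Real.exp (-‖c - y‖ ^ 2 / (4 * t)) * u₀ y| ≤
        (Real.exp (-‖c - y‖ ^ 2 / (4 * t)) ^ 2 + u₀ y ^ 2) / 2 := by
      rw [abs_mul]
      nlinarith [sq_nonneg (Real.exp (-‖c - y‖ ^ 2 / (4 * t)) - |u₀ y|), abs_nonneg (u₀ y),
        sq_abs (u₀ y), Real.exp_pos (-‖c - y‖ ^ 2 / (4 * t)), abs_of_pos (Real.exp_pos (-‖c - y‖ ^ 2 / (4 * t)))]
    calc ‖Real.exp (-‖c - y‖ ^ 2 / (4 * t)) * u₀ y‖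
        = |Real.exp (-‖c - y‖ ^ 2 / (4 * t)) * u₀ y| := rfl
      _ ≤ (Real.exp (-‖c - y‖ ^ 2 / (4 * t)) ^ 2 + u₀ y ^ 2) / 2 := h2
      _ = (Real.exp (-(1/(2*t)) * ‖c - y‖ ^ 2) + u₀ y ^ 2) / 2 := by rw [h1]
  -- pointwise a.e. bound
  have hae : ∀ᵐ y ∂(volume : Measure (EuclideanSpace ℝ (Fin d))), Real.exp (-‖x - y‖ ^ 2 / (4 * t)) * u₀ y ≤
      ∑ m ∈ F, Real.exp ((d : ℝ) / t) * (Real.exp (-‖v m - y‖ ^ 2 / (4 * t)) * u₀ y) := by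
    filter_upwards [hu₀pos] with y hy
    simp only [Pi.zero_apply] at hy
    -- choose a good lattice neighbor
    have hpick : ∀ i : Fin d, ∃ e : ℤ, e ∈ ({-1, 0, 1} : Finset ℤ) ∧
        (((k i : ℝ) + e) - y i) ^ 2 ≤ (x i - y i) ^ 2 + 1 / 4 :=
      fun i => heat_pick1 (x i) (k i) (y i) (hx i)
    choose m hm1 hm2 using hpick
    have hmF : m ∈ F := by
      rw [hF, Fintype.mem_piFinset]; exact hm1
    have hnorm : ‖v m - y‖ ^ 2 ≤ ‖x - y‖ ^ 2 + (d : ℝ) / 4 := by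
      rw [heat_norm_sub_sq, heat_norm_sub_sq]
      have : ∑ i, (v m i - y i) ^ 2 ≤ ∑ i, ((x i - y i) ^ 2 + 1 / 4) := by
        refine Finset.sum_le_sum fun i _ => ?_
        have := hm2 i
        simpa [hv] using this
      simpa [Finset.sum_add_distrib, div_eq_mul_inv, mul_comm] using this
    have hterm : Real.exp (-‖x - y‖ ^ 2 / (4 * t)) * u₀ y ≤
        Real.exp ((d : ℝ) / t) * (Real.exp (-‖v m - y‖ ^ 2 / (4 * t)) * u₀ y) := by
      rw [← mul_assoc, ← Real.exp_add]
      refine mul_le_mul_of_nonneg_right ?_ hy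
      rw [Real.exp_le_exp]
      have h16 : (0:ℝ) < 16 * t := by positivity
      have hdt : (d : ℝ) / (16 * t) ≤ (d : ℝ) / t := by
        apply div_le_div_of_nonneg_left (by positivity) ht (by linarith)
      have h1 : -‖x - y‖ ^ 2 ≤ (d:ℝ)/4 + -‖v m - y‖ ^ 2 := by linarith
      have h2 : -‖x - y‖ ^ 2 / (4*t) ≤ ((d:ℝ)/4 + -‖v m - y‖ ^ 2) / (4*t) := by gcongr
      have h3 : ((d:ℝ)/4 + -‖v m - y‖ ^ 2) / (4*t) = (d:ℝ)/(16*t) + -‖v m - y‖ ^ 2/(4*t) := by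
        field_simp
        ring
      linarith
    refine hterm.trans ?_
    exact Finset.single_le_sum
      (f := fun n => Real.exp ((d : ℝ) / t) * (Real.exp (-‖v n - y‖ ^ 2 / (4 * t)) * u₀ y))
      (fun n _ => mul_nonneg (Real.exp_pos _).le (mul_nonneg (Real.exp_pos _).le hy)) hmF
  -- integrate
  have hIsum : Integrable (fun y : EuclideanSpace ℝ (Fin d) =>
      ∑ m ∈ F, Real.exp ((d : ℝ) / t) * (Real.exp (-‖v m - y‖ ^ 2 / (4 * t)) * u₀ y)) := by
    apply integrable_finset_sum
    intro m _
    exact (hI (v m)).const_mul _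
  have hint : (∫ y, Real.exp (-‖x - y‖ ^ 2 / (4 * t)) * u₀ y) ≤
      ∑ m ∈ F, Real.exp ((d : ℝ) / t) * ∫ y, Real.exp (-‖v m - y‖ ^ 2 / (4 * t)) * u₀ y := by
    calc (∫ y, Real.exp (-‖x - y‖ ^ 2 / (4 * t)) * u₀ y)
        ≤ ∫ y, ∑ m ∈ F, Real.exp ((d : ℝ) / t) * (Real.exp (-‖v m - y‖ ^ 2 / (4 * t)) * u₀ y) :=
          integral_mono_ae (hI x) hIsum hae
      _ = ∑ m ∈ F, ∫ y, Real.exp ((d : ℝ) / t) * (Real.exp (-‖v m - y‖ ^ 2 / (4 * t)) * u₀ y) :=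
          integral_finset_sum F (fun m _ => (hI (v m)).const_mul _)
      _ = ∑ m ∈ F, Real.exp ((d : ℝ) / t) * ∫ y, Real.exp (-‖v m - y‖ ^ 2 / (4 * t)) * u₀ y := by
          simp_rw [integral_const_mul]
  have hheat_nonneg : ∀ m : Fin d → ℤ, 0 ≤ heatSolution d u₀ t (v m) := by
    intro m
    refine mul_nonneg hC ?_
    refine integral_nonneg_of_ae ?_
    filter_upwards [hu₀pos] with y hy
    simp only [Pi.zero_apply] at hy
    exact mul_nonneg (Real.exp_pos _).le hy
  have hmain : heatSolution d u₀ t x ≤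
      Real.exp ((d : ℝ) / t) * ∑ m ∈ F, heatSolution d u₀ t (v m) := by
    unfold heatSolution
    calc C * ∫ y, Real.exp (-‖x - y‖ ^ 2 / (4 * t)) * u₀ y
        ≤ C * ∑ m ∈ F, Real.exp ((d : ℝ) / t) *
            ∫ y, Real.exp (-‖v m - y‖ ^ 2 / (4 * t)) * u₀ y :=
          mul_le_mul_of_nonneg_left hint hC
      _ = Real.exp ((d : ℝ) / t) * ∑ m ∈ F,
            C * ∫ y, Real.exp (-‖v m - y‖ ^ 2 / (4 * t)) * u₀ y := by
          rw [Finset.mul_sum, Finset.mul_sum]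
          congr 1
          ext m
          ring
  have hpow : (1 : ℝ) ≤ 2 ^ (d - 1) := one_le_pow₀ (by norm_num)
  have hsum_nonneg : 0 ≤ ∑ m ∈ F, heatSolution d u₀ t (v m) :=
    Finset.sum_nonneg fun m _ => hheat_nonneg m
  calc heatSolution d u₀ t x
      ≤ Real.exp ((d : ℝ) / t) * ∑ m ∈ F, heatSolution d u₀ t (v m) := hmain
    _ ≤ 2 ^ (d - 1) * (Real.exp ((d : ℝ) / t) * ∑ m ∈ F, heatSolution d u₀ t (v m)) := by
        nlinarith [mul_nonneg (Real.exp_pos ((d : ℝ) / t)).le hsum_nonneg]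
    _ = 2 ^ (d - 1) * Real.exp ((d : ℝ) / t) * ∑ m ∈ F, heatSolution d u₀ t (v m) := by ring
end

section
/- Let d ≥ 1 and let u₀ ∈ L²(ℝ^d) satisfy u₀ ≥ 0 almost everywhere. Let u(t,x) = (4πt)^{−d/2} ∫_{ℝ^d} e^{−|x−y|²/(4t)} u₀(y) dy. Then for every t > 0 and every k ∈ ℤ^d, ∫_{Q_2(k)} u(t,x)² dx ≤ 24^d e^{2d/t} · Σ_{n ∈ ℤ^d, ‖n−k‖_∞ ≤ 1} u(t,n)². -/
open Real MeasureTheory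

/-! ### Auxiliary lemmas -/

lemma gauss_int (d : ℕ) {b : ℝ} (hb : 0 < b) :
    Integrable (fun v : EuclideanSpace ℝ (Fin d) => Real.exp (-b * ‖v‖ ^ 2)) := by
  have h := (GaussianFourier.integrable_cexp_neg_mul_sq_norm_add
    (V := EuclideanSpace ℝ (Fin d)) (b := (b : ℂ)) (by simpa using hb) 0 0).norm
  refine h.congr ?_
  filter_upwards with v
  rw [Complex.norm_exp]
  norm_num
  left
  norm_cast

lemma kernel_memL2 (d : ℕ) {t : ℝ} (ht : 0 < t) (n : EuclideanSpace ℝ (Fin d)) :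
    MemLp (fun y : EuclideanSpace ℝ (Fin d) => Real.exp (-‖n - y‖ ^ 2 / (4 * t))) 2 volume := by
  have hc : Continuous (fun y : EuclideanSpace ℝ (Fin d) =>
      Real.exp (-‖n - y‖ ^ 2 / (4 * t))) := by fun_prop
  rw [memLp_two_iff_integrable_sq hc.aestronglyMeasurable]
  have h := (gauss_int d (b := 1/(2*t)) (by positivity)).comp_sub_left n
  refine h.congr ?_
  filter_upwards with y
  rw [← Real.exp_nat_mul]
  congr 1
  field_simp
  ring

lemma ker_mul_int (d : ℕ) {t : ℝ} (ht : 0 < t) {u₀ : EuclideanSpace ℝ (Fin d) → ℝ}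
    (hu₀ : MemLp u₀ 2 (volume : Measure (EuclideanSpace ℝ (Fin d))))
    (n : EuclideanSpace ℝ (Fin d)) :
    Integrable (fun y => Real.exp (-‖n - y‖ ^ 2 / (4 * t)) * u₀ y) := by
  have := (hu₀.smul (kernel_memL2 d ht n) (r := 1)
      (hpqr := ⟨by rw [inv_one]; exact ENNReal.inv_two_add_inv_two⟩)
    : MemLp ((fun y => Real.exp (-‖n - y‖ ^ 2 / (4 * t))) • u₀) 1 volume)
  rw [memLp_one_iff_integrable] at this
  exact this.congr (by filter_upwards with y; simp [smul_eq_mul])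

lemma norm_sq_eq {d : ℕ} (z : EuclideanSpace ℝ (Fin d)) : ‖z‖ ^ 2 = ∑ i, (z i) ^ 2 := by
  rw [EuclideanSpace.norm_eq, Real.sq_sqrt (by positivity)]
  simp [sq_abs]

lemma coord_bound (k x y : ℝ) (hx : |x - k| ≤ 1) :
    ∃ m : ℤ, m ∈ ({-1, 0, 1} : Finset ℤ) ∧ ((k + m : ℝ) - y) ^ 2 ≤ (x - y) ^ 2 + 1 := by
  obtain ⟨h1, h2⟩ := abs_le.1 hx
  rcases le_or_gt y (k - 1) with h | h
  · exact ⟨-1, by decide, by push_cast; nlinarith⟩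
  rcases le_or_gt (k + 1) y with h' | h'
  · exact ⟨1, by decide, by push_cast; nlinarith⟩
  · exact ⟨0, by decide, by push_cast; nlinarith⟩

lemma kernel_sum_bound (d : ℕ) {t : ℝ} (ht : 0 < t) (k : Fin d → ℤ)
    (x y : EuclideanSpace ℝ (Fin d)) (hx : ∀ i, |x i - (k i : ℝ)| ≤ 1) :
    Real.exp (-‖x - y‖ ^ 2 / (4 * t)) ≤ Real.exp ((d : ℝ) / (4 * t)) *
      ∑ m ∈ Fintype.piFinset (fun _ : Fin d => ({-1, 0, 1} : Finset ℤ)),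
        Real.exp (-‖(show EuclideanSpace ℝ (Fin d) from WithLp.toLp 2 (fun i => ((k i + m i : ℤ) : ℝ))) - y‖ ^ 2
          / (4 * t)) := by
  choose m hm hmle using fun i => coord_bound (k i) (x i) (y i) (hx i)
  have hmem : m ∈ Fintype.piFinset (fun _ : Fin d => ({-1, 0, 1} : Finset ℤ)) :=
    Fintype.mem_piFinset.2 hm
  have hnorm : ‖(show EuclideanSpace ℝ (Fin d) from WithLp.toLp 2 (fun i => ((k i + m i : ℤ) : ℝ))) - y‖ ^ 2
      ≤ ‖x - y‖ ^ 2 + d := by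
    rw [norm_sq_eq, norm_sq_eq]
    have : ∀ i : Fin d, (((show EuclideanSpace ℝ (Fin d) from
        WithLp.toLp 2 (fun i => ((k i + m i : ℤ) : ℝ))) - y) i) ^ 2 ≤ ((x - y) i) ^ 2 + 1 := by
      intro i
      have e1 : ((show EuclideanSpace ℝ (Fin d) from
          WithLp.toLp 2 (fun i => ((k i + m i : ℤ) : ℝ))) - y) i = ((k i + m i : ℤ) : ℝ) - y i := rfl
      have e2 : (x - y) i = x i - y i := rfl
      rw [e1, e2]
      push_cast
      exact hmle i
    calc ∑ i, (((show EuclideanSpace ℝ (Fin d) from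
          WithLp.toLp 2 (fun i => ((k i + m i : ℤ) : ℝ))) - y) i) ^ 2
        ≤ ∑ i : Fin d, (((x - y) i) ^ 2 + 1) := Finset.sum_le_sum fun i _ => this i
      _ = ∑ i, ((x - y) i) ^ 2 + d := by
          rw [Finset.sum_add_distrib]
          simp
  have key : Real.exp (-‖x - y‖ ^ 2 / (4 * t)) ≤ Real.exp ((d : ℝ) / (4 * t)) *
      Real.exp (-‖(show EuclideanSpace ℝ (Fin d) from WithLp.toLp 2 (fun i => ((k i + m i : ℤ) : ℝ))) - y‖ ^ 2
        / (4 * t)) := by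
    rw [← Real.exp_add]
    apply Real.exp_le_exp.2
    rw [← add_div, le_div_iff₀ (by positivity), div_mul_eq_mul_div,
      div_le_iff₀ (by positivity)]
    nlinarith
  refine key.trans (mul_le_mul_of_nonneg_left ?_ (Real.exp_nonneg _))
  have := Finset.single_le_sum
    (f := fun m : Fin d → ℤ => Real.exp (-‖(show EuclideanSpace ℝ (Fin d) from
      WithLp.toLp 2 (fun i => ((k i + m i : ℤ) : ℝ))) - y‖ ^ 2 / (4 * t)))
    (s := Fintype.piFinset (fun _ : Fin d => ({-1, 0, 1} : Finset ℤ)))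
    (fun m _ => Real.exp_nonneg _) hmem
  exact this

lemma heatSolution_nonneg (d : ℕ) {u₀ : EuclideanSpace ℝ (Fin d) → ℝ}
    (hu₀pos : 0 ≤ᵐ[volume] u₀) {t : ℝ} (ht : 0 < t) (x : EuclideanSpace ℝ (Fin d)) :
    0 ≤ heatSolution d u₀ t x := by
  apply mul_nonneg (Real.rpow_nonneg (by positivity) _)
  apply integral_nonneg_of_ae
  filter_upwards [hu₀pos] with y hy
  exact mul_nonneg (Real.exp_nonneg _) hy

lemma heat_pointwise (d : ℕ) {t : ℝ} (ht : 0 < t) {u₀ : EuclideanSpace ℝ (Fin d) → ℝ}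
    (hu₀L2 : MemLp u₀ 2 (volume : Measure (EuclideanSpace ℝ (Fin d))))
    (hu₀pos : 0 ≤ᵐ[volume] u₀) (k : Fin d → ℤ) (x : EuclideanSpace ℝ (Fin d))
    (hx : ∀ i, |x i - (k i : ℝ)| ≤ 1) :
    heatSolution d u₀ t x ≤ Real.exp ((d : ℝ) / (4 * t)) *
      ∑ m ∈ Fintype.piFinset (fun _ : Fin d => ({-1, 0, 1} : Finset ℤ)),
        heatSolution d u₀ t
          (show EuclideanSpace ℝ (Fin d) from WithLp.toLp 2 (fun i => ((k i + m i : ℤ) : ℝ))) := by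
  have hc : (0:ℝ) ≤ (4 * Real.pi * t) ^ (-(d : ℝ) / 2) :=
    Real.rpow_nonneg (by positivity) _
  have hint : ∀ m : Fin d → ℤ, Integrable (fun y =>
      Real.exp (-‖(show EuclideanSpace ℝ (Fin d) from
        WithLp.toLp 2 (fun i => ((k i + m i : ℤ) : ℝ))) - y‖ ^ 2 / (4 * t)) * u₀ y) :=
    fun m => ker_mul_int d ht hu₀L2 _
  have h : (∫ y, Real.exp (-‖x - y‖ ^ 2 / (4 * t)) * u₀ y) ≤ Real.exp ((d : ℝ) / (4 * t)) *
      ∑ m ∈ Fintype.piFinset (fun _ : Fin d => ({-1, 0, 1} : Finset ℤ)),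
        ∫ y, Real.exp (-‖(show EuclideanSpace ℝ (Fin d) from
          WithLp.toLp 2 (fun i => ((k i + m i : ℤ) : ℝ))) - y‖ ^ 2 / (4 * t)) * u₀ y := by
    rw [← integral_finset_sum _ (fun m _ => hint m), ← integral_const_mul]
    apply integral_mono_of_nonneg
    · filter_upwards [hu₀pos] with y hy
      exact mul_nonneg (Real.exp_nonneg _) hy
    · exact (integrable_finset_sum _ (fun m _ => hint m)).const_mul _
    · filter_upwards [hu₀pos] with y hy
      calc Real.exp (-‖x - y‖ ^ 2 / (4 * t)) * u₀ y
          ≤ (Real.exp ((d : ℝ) / (4 * t)) *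
              ∑ m ∈ Fintype.piFinset (fun _ : Fin d => ({-1, 0, 1} : Finset ℤ)),
                Real.exp (-‖(show EuclideanSpace ℝ (Fin d) from
                  WithLp.toLp 2 (fun i => ((k i + m i : ℤ) : ℝ))) - y‖ ^ 2 / (4 * t))) * u₀ y :=
            mul_le_mul_of_nonneg_right (kernel_sum_bound d ht k x y hx) hy
        _ = Real.exp ((d : ℝ) / (4 * t)) *
              ∑ m ∈ Fintype.piFinset (fun _ : Fin d => ({-1, 0, 1} : Finset ℤ)),
                Real.exp (-‖(show EuclideanSpace ℝ (Fin d) from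
                  WithLp.toLp 2 (fun i => ((k i + m i : ℤ) : ℝ))) - y‖ ^ 2 / (4 * t)) * u₀ y := by
            rw [mul_assoc, Finset.sum_mul]
  unfold heatSolution
  calc (4 * Real.pi * t) ^ (-(d : ℝ) / 2) * ∫ y, Real.exp (-‖x - y‖ ^ 2 / (4 * t)) * u₀ y
      ≤ (4 * Real.pi * t) ^ (-(d : ℝ) / 2) * (Real.exp ((d : ℝ) / (4 * t)) *
          ∑ m ∈ Fintype.piFinset (fun _ : Fin d => ({-1, 0, 1} : Finset ℤ)),
            ∫ y, Real.exp (-‖(show EuclideanSpace ℝ (Fin d) from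
              WithLp.toLp 2 (fun i => ((k i + m i : ℤ) : ℝ))) - y‖ ^ 2 / (4 * t)) * u₀ y) :=
        mul_le_mul_of_nonneg_left h hc
    _ = Real.exp ((d : ℝ) / (4 * t)) *
          ∑ m ∈ Fintype.piFinset (fun _ : Fin d => ({-1, 0, 1} : Finset ℤ)),
            (4 * Real.pi * t) ^ (-(d : ℝ) / 2) *
              ∫ y, Real.exp (-‖(show EuclideanSpace ℝ (Fin d) from
                WithLp.toLp 2 (fun i => ((k i + m i : ℤ) : ℝ))) - y‖ ^ 2 / (4 * t)) * u₀ y := by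
        simp_rw [Finset.mul_sum]
        exact Finset.sum_congr rfl fun m _ => by ring

/-- For a non-negative initial datum `u₀ ∈ L²(ℝ^d)`, the heat solution satisfies,
for every `t > 0` and `k ∈ ℤ^d`,
`∫_{Q₂(k)} u(t,x)² dx ≤ 24^d * exp (2d/t) * ∑_{n ∈ ℤ^d, ‖n-k‖_∞ ≤ 1} u(t,n)²`. -/
theorem heat_local_L2_lattice_bound
    (d : ℕ) (hd : 1 ≤ d) (u₀ : EuclideanSpace ℝ (Fin d) → ℝ)
    (hu₀L2 : MemLp u₀ 2 (volume : Measure (EuclideanSpace ℝ (Fin d))))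
    (hu₀pos : 0 ≤ᵐ[volume] u₀) :
    ∀ t : ℝ, 0 < t → ∀ k : Fin d → ℤ,
      (∫ x in {x : EuclideanSpace ℝ (Fin d) | ∀ i, |x i - (k i : ℝ)| ≤ 1},
          (heatSolution d u₀ t x) ^ 2) ≤
        24 ^ d * Real.exp (2 * (d : ℝ) / t) *
          ∑ m ∈ Fintype.piFinset (fun _ : Fin d => ({-1, 0, 1} : Finset ℤ)),
            (heatSolution d u₀ t
              (show EuclideanSpace ℝ (Fin d) from WithLp.toLp 2 (fun i => ((k i + m i : ℤ) : ℝ)))) ^ 2 := by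
  intro t ht k
  set S : Set (EuclideanSpace ℝ (Fin d)) := {x | ∀ i, |x i - (k i : ℝ)| ≤ 1} with hS
  set Sig : ℝ := ∑ m ∈ Fintype.piFinset (fun _ : Fin d => ({-1, 0, 1} : Finset ℤ)),
    (heatSolution d u₀ t
      (show EuclideanSpace ℝ (Fin d) from WithLp.toLp 2 (fun i => ((k i + m i : ℤ) : ℝ)))) ^ 2 with hSig
  have hSig0 : 0 ≤ Sig := Finset.sum_nonneg fun m _ => sq_nonneg _
  set C : ℝ := Real.exp ((d : ℝ) / (4 * t)) ^ 2 * (3 ^ d * Sig) with hC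
  -- the preimage description of S
  set A : Set (Fin d → ℝ) := Set.univ.pi fun i => Set.Icc ((k i : ℝ) - 1) ((k i : ℝ) + 1) with hA
  have hAm : MeasurableSet A := MeasurableSet.univ_pi fun i => measurableSet_Icc
  set e := (MeasurableEquiv.toLp 2 (Fin d → ℝ)).symm with he
  have hpre : S = ⇑e ⁻¹' A := by
    ext x
    constructor
    · intro hx i _
      obtain ⟨h1, h2⟩ := abs_le.1 (hx i)
      have hxe : e x i = x i := rfl
      rw [hxe]
      exact Set.mem_Icc.2 ⟨by linarith, by linarith⟩
    · intro hx i
      have h' := Set.mem_Icc.1 (hx i (Set.mem_univ i))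
      have hxe : e x i = x i := rfl
      rw [hxe] at h'
      obtain ⟨h1, h2⟩ := h'
      exact abs_le.2 ⟨by linarith, by linarith⟩
  have hSm : MeasurableSet S := hpre ▸ e.measurable hAm
  have hSvol : volume S = 2 ^ d := by
    rw [hpre,
      (EuclideanSpace.volume_preserving_symm_measurableEquiv_toLp (Fin d)).measure_preimage
        hAm.nullMeasurableSet, hA, volume_pi_pi]
    have : ∀ i : Fin d, volume (Set.Icc ((k i : ℝ) - 1) ((k i : ℝ) + 1)) = 2 := by
      intro i
      rw [Real.volume_Icc, show (k i : ℝ) + 1 - ((k i : ℝ) - 1) = 2 by ring]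
      norm_num
    simp [this]
  -- pointwise bound on S
  have hpoint : ∀ x ∈ S, ‖(heatSolution d u₀ t x) ^ 2‖ ≤ C := by
    intro x hx
    rw [Real.norm_eq_abs, abs_of_nonneg (sq_nonneg _)]
    have h0 := heatSolution_nonneg d hu₀pos ht x
    have h1 := heat_pointwise d ht hu₀L2 hu₀pos k x hx
    have h2 := pow_le_pow_left₀ h0 h1 2
    rw [mul_pow] at h2
    refine h2.trans ?_
    rw [hC]
    apply mul_le_mul_of_nonneg_left ?_ (sq_nonneg _)
    have hcard := sq_sum_le_card_mul_sum_sq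
      (s := Fintype.piFinset (fun _ : Fin d => ({-1, 0, 1} : Finset ℤ)))
      (f := fun m : Fin d → ℤ => heatSolution d u₀ t
        (show EuclideanSpace ℝ (Fin d) from WithLp.toLp 2 (fun i => ((k i + m i : ℤ) : ℝ)))) (α := ℝ)
    refine hcard.trans ?_
    have : ((Fintype.piFinset (fun _ : Fin d => ({-1, 0, 1} : Finset ℤ))).card : ℝ)
        = 3 ^ d := by
      rw [Fintype.card_piFinset]
      simp
    rw [this]
  -- integrate the bound
  have hfin : volume S < ⊤ := by
    rw [hSvol]
    exact ENNReal.pow_lt_top (by norm_num)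
  have hb := norm_setIntegral_le_of_norm_le_const (μ := volume) (s := S)
    (f := fun x => (heatSolution d u₀ t x) ^ 2) hfin hpoint
  have hle : (∫ x in S, (heatSolution d u₀ t x) ^ 2) ≤ C * (volume S).toReal :=
    (le_abs_self _).trans (by simpa [Real.norm_eq_abs, Measure.real] using hb)
  have htoReal : (volume S).toReal = 2 ^ d := by
    rw [hSvol, ENNReal.toReal_pow]
    norm_num
  rw [htoReal] at hle
  refine hle.trans ?_
  -- final arithmetic
  have hE : Real.exp ((d : ℝ) / (4 * t)) ^ 2 = Real.exp ((d : ℝ) / (2 * t)) := by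
    rw [sq, ← Real.exp_add]
    congr 1
    field_simp
    ring
  have hexp : Real.exp ((d : ℝ) / (2 * t)) ≤ Real.exp (2 * (d : ℝ) / t) := by
    apply Real.exp_le_exp.2
    rw [div_le_div_iff₀ (by positivity) ht]
    nlinarith [Nat.cast_nonneg (α := ℝ) d, ht.le]
  have h6 : ((2:ℝ) ^ d) * 3 ^ d = 6 ^ d := by
    rw [← mul_pow]; norm_num
  have h624 : ((6:ℝ)) ^ d ≤ 24 ^ d := pow_le_pow_left₀ (by norm_num) (by norm_num) d
  calc C * 2 ^ d = 6 ^ d * (Real.exp ((d : ℝ) / (2 * t)) * Sig) := by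
        rw [hC, hE, ← h6]; ring
    _ ≤ 24 ^ d * (Real.exp (2 * (d : ℝ) / t) * Sig) := by
        apply mul_le_mul h624 (mul_le_mul_of_nonneg_right hexp hSig0) (by positivity)
          (by positivity)
    _ = 24 ^ d * Real.exp (2 * (d : ℝ) / t) * Sig := by ring
end
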